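/- arXiv:2604.22798 — 3 statements merged into one kernel-verified Lean document; each statement's English description precedes it below -/
import Mathlib

section
/- Let ν > -1 be real. Then every complex zero of f_ν is a negative real number: if w ∈ ℂ and f_ν(w) = 0, then w is real and w < 0. (Equivalently: all zeros of the Bessel function J_ν are real, and all zeros of the modified Bessel function I_ν off the branch cut are purely imaginary; in particular I_ν(x) ≠ 0 for every real x > 0.) -/
open scoped BigOperators
open MeasureTheory

/-- The entire function `f_ν(w) = Σ_{m=0}^∞ w^m / (m! · Γ(m+ν+1))`,
where `Γ` is the complex Gamma function. -/
noncomputable def besselF (ν : ℝ) (w : ℂ) : ℂ :=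
  ∑' m : ℕ, w ^ m / ((m.factorial : ℂ) * Complex.Gamma ((m : ℂ) + (ν : ℂ) + 1))




noncomputable def bc (ν : ℝ) (m : ℕ) : ℝ := 1 / (m.factorial * Real.Gamma (m + ν + 1))

lemma bc_pos {ν : ℝ} (hν : -1 < ν) (m : ℕ) : 0 < bc ν m := by
  have h1 : (0:ℝ) < m + ν + 1 := by
    have : (0:ℝ) ≤ m := Nat.cast_nonneg m
    linarith
  have := Real.Gamma_pos_of_pos h1
  have hf : (0:ℝ) < m.factorial := by positivity
  unfold bc; positivity

lemma bc_rec {ν : ℝ} (hν : -1 < ν) (m : ℕ) :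
    bc ν m = ((m:ℝ)+1) * ((m:ℝ)+1+ν) * bc ν (m+1) := by
  have h1 : (0:ℝ) < m + ν + 1 := by
    have : (0:ℝ) ≤ m := Nat.cast_nonneg m
    linarith
  have hG : Real.Gamma ((m:ℝ) + ν + 1 + 1) = ((m:ℝ)+ν+1) * Real.Gamma ((m:ℝ)+ν+1) :=
    Real.Gamma_add_one (ne_of_gt h1)
  have hGpos := Real.Gamma_pos_of_pos h1
  have hcast : ((m+1 : ℕ) : ℝ) + ν + 1 = (m:ℝ) + ν + 1 + 1 := by push_cast; ring
  unfold bc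
  rw [hcast, hG, Nat.factorial_succ]
  have hf : (0:ℝ) < m.factorial := by positivity
  push_cast
  field_simp
  ring

lemma besselF_eq (ν : ℝ) (w : ℂ) :
    besselF ν w = ∑' m : ℕ, (bc ν m : ℂ) * w ^ m := by
  unfold besselF
  refine tsum_congr fun m => ?_
  have hc : (m : ℂ) + (ν : ℂ) + 1 = (((m : ℝ) + ν + 1 : ℝ) : ℂ) := by push_cast; ring
  rw [hc, Complex.Gamma_ofReal]
  unfold bc
  push_cast
  rw [div_eq_mul_inv, mul_comm, one_div, mul_inv]


lemma summable_master {ν : ℝ} (hν : -1 < ν) {r : ℝ} (hr : 0 ≤ r) :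
    Summable (fun m : ℕ => ((m:ℝ)+1) * bc ν m * r ^ m) := by
  apply summable_of_ratio_norm_eventually_le (r := 1/2) (by norm_num)
  rw [Filter.eventually_atTop]
  refine ⟨⌈4*r⌉₊ + 1, fun m hm => ?_⟩
  have hm1 : 1 ≤ m := le_trans (Nat.le_add_left 1 _) hm
  have hmr : 4*r ≤ (m:ℝ) := by
    calc 4*r ≤ (⌈4*r⌉₊ : ℝ) := Nat.le_ceil _
    _ ≤ m := by exact_mod_cast le_trans (Nat.le_succ _) hm
  have hb := bc_pos hν m
  have hb1 := bc_pos hν (m+1)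
  have hrm : (0:ℝ) ≤ r ^ m := by positivity
  have hmR : (1:ℝ) ≤ (m:ℝ) := by exact_mod_cast hm1
  rw [Real.norm_of_nonneg (by positivity), Real.norm_of_nonneg (by positivity)]
  have hrec := bc_rec hν m
  have key : ((m:ℝ)+1+1) * bc ν (m+1) * r ≤ 1/2 * (((m:ℝ)+1) * bc ν m) := by
    rw [hrec]
    rw [div_mul_eq_mul_div, le_div_iff₀ (by norm_num : (0:ℝ) < 2)]
    have hν1 : (0:ℝ) < (m:ℝ)+1+ν := by linarith
    have h2 : 2*(((m:ℝ)+1+1))*r ≤ (m:ℝ)*((m:ℝ)+1) := by nlinarith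
    have h3 : (m:ℝ)*((m:ℝ)+1) ≤ ((m:ℝ)+1)*(((m:ℝ)+1)*((m:ℝ)+1+ν)) := by
      have hmn : (m:ℝ) ≤ (m:ℝ)+1+ν := by linarith
      have hsq : (0:ℝ) ≤ ((m:ℝ)+1)*((m:ℝ)+1) := by positivity
      nlinarith [mul_le_mul_of_nonneg_left hmn hsq]
    nlinarith [mul_le_mul_of_nonneg_right (h2.trans h3) hb1.le]
  have hcast : ((m+1:ℕ):ℝ)+1 = (m:ℝ)+1+1 := by push_cast; ring
  rw [hcast]
  calc ((m:ℝ)+1+1) * bc ν (m+1) * r^(m+1)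
      = (((m:ℝ)+1+1) * bc ν (m+1) * r) * r^m := by rw [pow_succ]; ring
    _ ≤ (1/2 * (((m:ℝ)+1) * bc ν m)) * r^m := by
        apply mul_le_mul_of_nonneg_right key hrm
    _ = 1/2 * (((m:ℝ)+1) * bc ν m * r^m) := by ring



lemma summable_bc_pow {ν : ℝ} (hν : -1 < ν) {r : ℝ} (hr : 0 ≤ r) :
    Summable (fun m : ℕ => bc ν m * r ^ m) := by
  refine Summable.of_nonneg_of_le (fun m => mul_nonneg (bc_pos hν m).le (by positivity)) (fun m => ?_)
    (summable_master hν hr)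
  have hb := (bc_pos hν m).le
  have h1 : (0:ℝ) ≤ r ^ m := by positivity
  nlinarith [mul_nonneg (mul_nonneg (Nat.cast_nonneg m : (0:ℝ) ≤ m) hb) h1]

lemma norm_bcw (ν : ℝ) (w : ℂ) (m : ℕ) (hν : -1 < ν) :
    ‖(bc ν m : ℂ) * w ^ m‖ = bc ν m * ‖w‖ ^ m := by
  rw [norm_mul, norm_pow, Complex.norm_real, Real.norm_of_nonneg (bc_pos hν m).le]

lemma summable_norm_bcw {ν : ℝ} (hν : -1 < ν) (w : ℂ) :
    Summable (fun m : ℕ => ‖(bc ν m : ℂ) * w ^ m‖) := by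
  simpa only [norm_bcw ν w _ hν] using summable_bc_pow hν (norm_nonneg w)

lemma summable_bcw {ν : ℝ} (hν : -1 < ν) (w : ℂ) :
    Summable (fun m : ℕ => (bc ν m : ℂ) * w ^ m) :=
  (summable_norm_bcw hν w).of_norm

lemma summable_norm_mbcw {ν : ℝ} (hν : -1 < ν) (w : ℂ) :
    Summable (fun m : ℕ => ‖(m : ℂ) * (bc ν m : ℂ) * w ^ m‖) := by
  refine Summable.of_nonneg_of_le (fun m => norm_nonneg _) (fun m => ?_)
    (summable_master hν (norm_nonneg w))
  rw [norm_mul, norm_mul, norm_pow, Complex.norm_real, Complex.norm_natCast,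
    Real.norm_of_nonneg (bc_pos hν m).le]
  have hb := (bc_pos hν m).le
  have h1 : (0:ℝ) ≤ ‖w‖ ^ m := by positivity
  nlinarith [mul_nonneg (mul_nonneg (Nat.cast_nonneg m : (0:ℝ) ≤ m) hb) h1]

lemma summable_mbcw {ν : ℝ} (hν : -1 < ν) (w : ℂ) :
    Summable (fun m : ℕ => (m : ℂ) * (bc ν m : ℂ) * w ^ m) :=
  (summable_norm_mbcw hν w).of_norm


noncomputable def besselG (ν : ℝ) (w : ℂ) : ℂ :=
  ∑' m : ℕ, (m : ℂ) * (bc ν m : ℂ) * w ^ m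

/-- The term of the Lommel-type double series. -/
noncomputable def bA (ν : ℝ) (w v : ℂ) (p : ℕ × ℕ) : ℂ :=
  (bc ν p.1 : ℂ) * (bc ν p.2 : ℂ) * w ^ p.1 * v ^ p.2 / ((p.1 : ℂ) + (p.2 : ℂ) + ν + 1)

noncomputable def besselT (ν : ℝ) (w v : ℂ) : ℂ := ∑' p : ℕ × ℕ, bA ν w v p

lemma den_cast (ν : ℝ) (m n : ℕ) :
    ((m : ℂ) + (n : ℂ) + ν + 1) = (((m : ℝ) + n + ν + 1 : ℝ) : ℂ) := by push_cast; ring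

lemma den_pos {ν : ℝ} (hν : -1 < ν) (m n : ℕ) : (0:ℝ) < (m : ℝ) + n + ν + 1 := by
  have h1 : (0:ℝ) ≤ m := Nat.cast_nonneg m
  have h2 : (0:ℝ) ≤ n := Nat.cast_nonneg n
  linarith

lemma den_ne {ν : ℝ} (hν : -1 < ν) (m n : ℕ) : ((m : ℂ) + (n : ℂ) + ν + 1) ≠ 0 := by
  rw [den_cast]
  exact_mod_cast (den_pos hν m n).ne'

lemma summable_double_norm {ν : ℝ} (hν : -1 < ν) (w v : ℂ) :
    Summable (fun p : ℕ × ℕ => (bc ν p.1 * ‖w‖ ^ p.1) * (bc ν p.2 * ‖v‖ ^ p.2)) :=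
  Summable.mul_of_nonneg (f := fun m => bc ν m * ‖w‖ ^ m) (g := fun n => bc ν n * ‖v‖ ^ n)
    (summable_bc_pow hν (norm_nonneg w))
    (summable_bc_pow hν (norm_nonneg v))
    (fun m => mul_nonneg (bc_pos hν m).le (by positivity))
    (fun n => mul_nonneg (bc_pos hν n).le (by positivity))

lemma summable_bA {ν : ℝ} (hν : -1 < ν) (w v : ℂ) : Summable (bA ν w v) := by
  apply Summable.of_norm_bounded (g :=
    fun p : ℕ × ℕ => (1/(ν+1)) * ((bc ν p.1 * ‖w‖ ^ p.1) * (bc ν p.2 * ‖v‖ ^ p.2)))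
    ((summable_double_norm hν w v).mul_left _)
  rintro ⟨m, n⟩
  unfold bA
  rw [norm_div, den_cast, Complex.norm_real, Real.norm_of_nonneg (den_pos hν m n).le]
  rw [norm_mul, norm_mul, norm_mul, norm_pow, norm_pow, Complex.norm_real, Complex.norm_real,
    Real.norm_of_nonneg (bc_pos hν m).le, Real.norm_of_nonneg (bc_pos hν n).le]
  rw [div_eq_mul_inv, mul_comm]
  have hle : ((m:ℝ) + n + ν + 1)⁻¹ ≤ 1/(ν+1) := by
    rw [one_div]
    apply inv_anti₀ (by linarith)
    have h1 : (0:ℝ) ≤ m := Nat.cast_nonneg m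
    have h2 : (0:ℝ) ≤ n := Nat.cast_nonneg n
    linarith
  have hnn : (0:ℝ) ≤ bc ν m * bc ν n * ‖w‖ ^ m * ‖v‖ ^ n :=
    mul_nonneg (mul_nonneg (mul_nonneg (bc_pos hν m).le (bc_pos hν n).le) (by positivity))
      (by positivity)
  exact (mul_le_mul_of_nonneg_right hle hnn).trans_eq (by ring)


lemma bc_rec_complex {ν : ℝ} (hν : -1 < ν) (m : ℕ) :
    (bc ν m : ℂ) = ((m:ℂ)+1) * ((m:ℂ)+1+ν) * (bc ν (m+1) : ℂ) := by
  have := bc_rec hν m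
  push_cast [this]
  ring

section keyid
variable {ν : ℝ} {w' v' : ℂ}

/-- shifted numerator functions -/
noncomputable def bB (ν : ℝ) (w v : ℂ) (p : ℕ × ℕ) : ℂ :=
  (p.2:ℂ) * ((p.2:ℂ)+ν) * (bc ν p.1 : ℂ) * (bc ν p.2 : ℂ) * w ^ p.1 * v ^ p.2
    / ((p.1 : ℂ) + (p.2 : ℂ) + ν)

noncomputable def bB' (ν : ℝ) (w v : ℂ) (p : ℕ × ℕ) : ℂ :=
  (p.1:ℂ) * ((p.1:ℂ)+ν) * (bc ν p.1 : ℂ) * (bc ν p.2 : ℂ) * w ^ p.1 * v ^ p.2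
    / ((p.1 : ℂ) + (p.2 : ℂ) + ν)

lemma shiftB {ν : ℝ} (hν : -1 < ν) (w v : ℂ) (p : ℕ × ℕ) : bB ν w v (p.1, p.2 + 1) = v * bA ν w v p := by
  obtain ⟨m, n⟩ := p
  unfold bB bA
  simp only
  have hd : ((m : ℂ) + ((n+1 : ℕ) : ℂ) + ν) = ((m : ℂ) + (n : ℂ) + ν + 1) := by push_cast; ring
  rw [hd, bc_rec_complex hν n, ← mul_div_assoc,
    div_eq_div_iff (den_ne hν m n) (den_ne hν m n)]
  push_cast
  ring

lemma shiftB' {ν : ℝ} (hν : -1 < ν) (w v : ℂ) (p : ℕ × ℕ) : bB' ν w v (p.1 + 1, p.2) = w * bA ν w v p := by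
  obtain ⟨m, n⟩ := p
  unfold bB' bA
  simp only
  have hd : (((m+1 : ℕ) : ℂ) + (n : ℂ) + ν) = ((m : ℂ) + (n : ℂ) + ν + 1) := by push_cast; ring
  rw [hd, bc_rec_complex hν m, ← mul_div_assoc,
    div_eq_div_iff (den_ne hν m n) (den_ne hν m n)]
  push_cast
  ring

lemma B_zero {ν : ℝ} (w v : ℂ) (p : ℕ × ℕ) (h : p.2 = 0) : bB ν w v p = 0 := by
  unfold bB; rw [h]; simp

lemma B'_zero {ν : ℝ} (w v : ℂ) (p : ℕ × ℕ) (h : p.1 = 0) : bB' ν w v p = 0 := by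
  unfold bB'; rw [h]; simp

lemma g2_inj : Function.Injective (fun p : ℕ × ℕ => (p.1, p.2 + 1)) := by
  rintro ⟨a, b⟩ ⟨c, d⟩ h
  simp only [Prod.mk.injEq] at h
  exact Prod.ext h.1 (by omega)

lemma g1_inj : Function.Injective (fun p : ℕ × ℕ => (p.1 + 1, p.2)) := by
  rintro ⟨a, b⟩ ⟨c, d⟩ h
  simp only [Prod.mk.injEq] at h
  exact Prod.ext (by omega) h.2

lemma g2_range (x : ℕ × ℕ) (hx : x ∉ Set.range (fun p : ℕ × ℕ => (p.1, p.2 + 1))) :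
    x.2 = 0 := by
  by_contra h
  obtain ⟨m, n⟩ := x
  simp only at h
  obtain ⟨k, hk⟩ := Nat.exists_eq_succ_of_ne_zero h
  exact hx ⟨(m, k), by simp [hk]⟩

lemma g1_range (x : ℕ × ℕ) (hx : x ∉ Set.range (fun p : ℕ × ℕ => (p.1 + 1, p.2))) :
    x.1 = 0 := by
  by_contra h
  obtain ⟨m, n⟩ := x
  simp only at h
  obtain ⟨k, hk⟩ := Nat.exists_eq_succ_of_ne_zero h
  exact hx ⟨(k, n), by simp [hk]⟩

lemma summable_bB {ν : ℝ} (hν : -1 < ν) (w v : ℂ) : Summable (bB ν w v) := by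
  rw [← Function.Injective.summable_iff g2_inj (fun x hx => B_zero w v x (g2_range x hx))]
  have : (bB ν w v) ∘ (fun p : ℕ × ℕ => (p.1, p.2 + 1)) = fun p => v * bA ν w v p := by
    funext p; exact shiftB hν w v p
  rw [this]
  exact (summable_bA hν w v).mul_left v

lemma summable_bB' {ν : ℝ} (hν : -1 < ν) (w v : ℂ) : Summable (bB' ν w v) := by
  rw [← Function.Injective.summable_iff g1_inj (fun x hx => B'_zero w v x (g1_range x hx))]
  have : (bB' ν w v) ∘ (fun p : ℕ × ℕ => (p.1 + 1, p.2)) = fun p => w * bA ν w v p := by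
    funext p; exact shiftB' hν w v p
  rw [this]
  exact (summable_bA hν w v).mul_left w

lemma tsum_bB {ν : ℝ} (hν : -1 < ν) (w v : ℂ) : ∑' p : ℕ × ℕ, bB ν w v p = v * besselT ν w v := by
  have hsupp : Function.support (bB ν w v) ⊆ Set.range (fun p : ℕ × ℕ => (p.1, p.2 + 1)) := by
    intro x hx
    by_contra h
    exact hx (B_zero w v x (g2_range x h))
  rw [← Function.Injective.tsum_eq g2_inj hsupp]
  unfold besselT
  rw [← tsum_mul_left]
  exact tsum_congr fun p => shiftB hν w v p

lemma tsum_bB' {ν : ℝ} (hν : -1 < ν) (w v : ℂ) : ∑' p : ℕ × ℕ, bB' ν w v p = w * besselT ν w v := by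
  have hsupp : Function.support (bB' ν w v) ⊆ Set.range (fun p : ℕ × ℕ => (p.1 + 1, p.2)) := by
    intro x hx
    by_contra h
    exact hx (B'_zero w v x (g1_range x h))
  rw [← Function.Injective.tsum_eq g1_inj hsupp]
  unfold besselT
  rw [← tsum_mul_left]
  exact tsum_congr fun p => shiftB' hν w v p

lemma BD {ν : ℝ} (hν : -1 < ν) (w v : ℂ) (p : ℕ × ℕ) :
    bB ν w v p - bB' ν w v p =
      ((bc ν p.1 : ℂ) * w ^ p.1) * ((p.2:ℂ) * (bc ν p.2 : ℂ) * v ^ p.2)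
      - ((p.1:ℂ) * (bc ν p.1 : ℂ) * w ^ p.1) * ((bc ν p.2 : ℂ) * v ^ p.2) := by
  obtain ⟨m, n⟩ := p
  unfold bB bB'
  simp only
  by_cases hd : ((m : ℂ) + (n : ℂ) + ν) = 0
  · have hr : ((m:ℝ) + n + ν) = 0 := by exact_mod_cast hd
    have hm0 : (0:ℝ) ≤ (m:ℝ) := Nat.cast_nonneg m
    have hn0 : (0:ℝ) ≤ (n:ℝ) := Nat.cast_nonneg n
    have hmn : (m:ℝ) + n < 1 := by linarith
    have hm : m = 0 := by
      by_contra h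
      have : (1:ℝ) ≤ (m:ℝ) := by exact_mod_cast Nat.one_le_iff_ne_zero.mpr h
      linarith
    have hn : n = 0 := by
      by_contra h
      have : (1:ℝ) ≤ (n:ℝ) := by exact_mod_cast Nat.one_le_iff_ne_zero.mpr h
      linarith
    subst hm hn
    simp
  · rw [div_sub_div_same, div_eq_iff hd]
    ring

set_option maxHeartbeats 1000000 in
theorem besselT_key {ν : ℝ} (hν : -1 < ν) (w v : ℂ) :
    (v - w) * besselT ν w v = besselF ν w * besselG ν v - besselG ν w * besselF ν v := by
  have hsE : Summable (fun p : ℕ × ℕ =>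
      ((bc ν p.1 : ℂ) * w ^ p.1) * ((p.2:ℂ) * (bc ν p.2 : ℂ) * v ^ p.2)) :=
    summable_mul_of_summable_norm (f := fun m : ℕ => (bc ν m : ℂ) * w ^ m)
      (g := fun n : ℕ => (n:ℂ) * (bc ν n : ℂ) * v ^ n)
      (summable_norm_bcw hν w) (summable_norm_mbcw hν v)
  have hsE' : Summable (fun p : ℕ × ℕ =>
      ((p.1:ℂ) * (bc ν p.1 : ℂ) * w ^ p.1) * ((bc ν p.2 : ℂ) * v ^ p.2)) :=
    summable_mul_of_summable_norm (f := fun m : ℕ => (m:ℂ) * (bc ν m : ℂ) * w ^ m)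
      (g := fun n : ℕ => (bc ν n : ℂ) * v ^ n)
      (summable_norm_mbcw hν w) (summable_norm_bcw hν v)
  calc (v - w) * besselT ν w v
      = v * besselT ν w v - w * besselT ν w v := by ring
    _ = (∑' p : ℕ × ℕ, bB ν w v p) - ∑' p : ℕ × ℕ, bB' ν w v p := by
        rw [tsum_bB hν w v, tsum_bB' hν w v]
    _ = ∑' p : ℕ × ℕ, (bB ν w v p - bB' ν w v p) :=
        (Summable.tsum_sub (summable_bB hν w v) (summable_bB' hν w v)).symm
    _ = ∑' p : ℕ × ℕ, (((bc ν p.1 : ℂ) * w ^ p.1) * ((p.2:ℂ) * (bc ν p.2 : ℂ) * v ^ p.2)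
          - ((p.1:ℂ) * (bc ν p.1 : ℂ) * w ^ p.1) * ((bc ν p.2 : ℂ) * v ^ p.2)) :=
        tsum_congr fun p => BD hν w v p
    _ = (∑' p : ℕ × ℕ, ((bc ν p.1 : ℂ) * w ^ p.1) * ((p.2:ℂ) * (bc ν p.2 : ℂ) * v ^ p.2))
          - ∑' p : ℕ × ℕ, ((p.1:ℂ) * (bc ν p.1 : ℂ) * w ^ p.1) * ((bc ν p.2 : ℂ) * v ^ p.2) :=
        Summable.tsum_sub hsE hsE'
    _ = besselF ν w * besselG ν v - besselG ν w * besselF ν v := by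
        rw [besselF_eq, besselF_eq]
        unfold besselG
        rw [← tsum_mul_tsum_of_summable_norm (f := fun m : ℕ => (bc ν m : ℂ) * w ^ m)
            (g := fun n : ℕ => (n:ℂ) * (bc ν n : ℂ) * v ^ n)
            (summable_norm_bcw hν w) (summable_norm_mbcw hν v),
          ← tsum_mul_tsum_of_summable_norm (f := fun m : ℕ => (m:ℂ) * (bc ν m : ℂ) * w ^ m)
            (g := fun n : ℕ => (bc ν n : ℂ) * v ^ n)
            (summable_norm_mbcw hν w) (summable_norm_bcw hν v)]
end keyid


lemma besselF_conj (ν : ℝ) (z : ℂ) :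
    besselF ν ((starRingEnd ℂ) z) = (starRingEnd ℂ) (besselF ν z) := by
  rw [besselF_eq, besselF_eq]
  have : (starRingEnd ℂ) (∑' m : ℕ, (bc ν m : ℂ) * z ^ m)
      = ∑' m : ℕ, (starRingEnd ℂ) ((bc ν m : ℂ) * z ^ m) := tsum_star
  rw [this]
  refine tsum_congr fun m => ?_
  simp [map_mul, map_pow, Complex.conj_ofReal]

lemma rpow_nat_nu {ν : ℝ} (k : ℕ) {s : ℝ} (hs : 0 < s) :
    s ^ ((k:ℝ) + ν) = s ^ k * s ^ ν := by
  rw [Real.rpow_add hs, Real.rpow_natCast]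

lemma neg_one_lt_k_nu {ν : ℝ} (hν : -1 < ν) (k : ℕ) : (-1:ℝ) < (k:ℝ) + ν := by
  have : (0:ℝ) ≤ k := Nat.cast_nonneg k
  linarith

lemma integral_rpow_Ioc {ν : ℝ} (hν : -1 < ν) (k : ℕ) {δ : ℝ} (h0 : 0 < δ) :
    ∫ s in Set.Ioc (0:ℝ) δ, s ^ ((k:ℝ) + ν) = δ ^ ((k:ℝ) + ν + 1) / ((k:ℝ) + ν + 1) := by
  rw [← intervalIntegral.integral_of_le h0.le, integral_rpow (Or.inl (neg_one_lt_k_nu hν k))]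
  rw [Real.zero_rpow (by have := neg_one_lt_k_nu hν k; intro h; linarith [h])]
  ring

lemma integrableOn_rpow_Ioc {ν : ℝ} (hν : -1 < ν) (k : ℕ) {δ : ℝ} (h0 : 0 < δ) :
    IntegrableOn (fun s : ℝ => s ^ ((k:ℝ) + ν)) (Set.Ioc 0 δ) :=
  (intervalIntegrable_iff_integrableOn_Ioc_of_le h0.le).mp
    (intervalIntegral.intervalIntegrable_rpow' (neg_one_lt_k_nu hν k))

lemma besselF_contOn {ν : ℝ} (hν : -1 < ν) (w : ℂ) :
    ContinuousOn (fun s : ℝ => besselF ν (w * s)) (Set.Icc 0 1) := by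
  rw [continuousOn_iff_continuous_restrict]
  have heq : (Set.Icc (0:ℝ) 1).restrict (fun s : ℝ => besselF ν (w * s))
      = fun s : Set.Icc (0:ℝ) 1 => ∑' m : ℕ, (bc ν m : ℂ) * (w * ((s:ℝ):ℂ)) ^ m := by
    funext s; exact besselF_eq ν _
  show Continuous ((Set.Icc (0:ℝ) 1).restrict (fun s : ℝ => besselF ν (w * s)))
  rw [heq]
  apply continuous_tsum (u := fun m => bc ν m * ‖w‖ ^ m)
  · intro m
    exact continuous_const.mul (((continuous_const.mul
      (Complex.continuous_ofReal.comp continuous_subtype_val))).pow m)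
  · exact summable_bc_pow hν (norm_nonneg w)
  · rintro m ⟨s, hs0, hs1⟩
    rw [norm_mul, norm_pow, Complex.norm_real, Real.norm_of_nonneg (bc_pos hν m).le]
    apply mul_le_mul_of_nonneg_left _ (bc_pos hν m).le
    apply pow_le_pow_left₀ (norm_nonneg _)
    rw [norm_mul, Complex.norm_real, Real.norm_of_nonneg hs0]
    calc ‖w‖ * s ≤ ‖w‖ * 1 := by
          exact mul_le_mul_of_nonneg_left hs1 (norm_nonneg w)
      _ = ‖w‖ := mul_one _

lemma besselF_norm_le {ν : ℝ} (hν : -1 < ν) (w : ℂ) {s : ℝ} (hs : s ∈ Set.Icc (0:ℝ) 1) :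
    ‖besselF ν (w * s)‖ ≤ ∑' m : ℕ, bc ν m * ‖w‖ ^ m := by
  obtain ⟨hs0, hs1⟩ := hs
  rw [besselF_eq]
  refine (norm_tsum_le_tsum_norm (summable_norm_bcw hν _)).trans ?_
  refine Summable.tsum_le_tsum (fun m => ?_) (summable_norm_bcw hν _) (summable_bc_pow hν (norm_nonneg w))
  rw [norm_mul, norm_pow, Complex.norm_real, Real.norm_of_nonneg (bc_pos hν m).le]
  apply mul_le_mul_of_nonneg_left _ (bc_pos hν m).le
  apply pow_le_pow_left₀ (norm_nonneg _)
  rw [norm_mul, Complex.norm_real, Real.norm_of_nonneg hs0]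
  calc ‖w‖ * s ≤ ‖w‖ * 1 := mul_le_mul_of_nonneg_left hs1 (norm_nonneg w)
    _ = ‖w‖ := mul_one _

lemma besselF_lower {ν : ℝ} (hν : -1 < ν) (w : ℂ) {s : ℝ} (hs : s ∈ Set.Icc (0:ℝ) 1) :
    bc ν 0 - (∑' m : ℕ, bc ν (m+1) * ‖w‖ ^ (m+1)) * s ≤ ‖besselF ν (w * s)‖ := by
  obtain ⟨hs0, hs1⟩ := hs
  have hsum : Summable (fun m : ℕ => (bc ν m : ℂ) * (w * (s:ℂ)) ^ m) := summable_bcw hν _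
  have hsplit : besselF ν (w * s) = (bc ν 0 : ℂ) +
      ∑' m : ℕ, (bc ν (m+1) : ℂ) * (w * (s:ℂ)) ^ (m+1) := by
    rw [besselF_eq, Summable.tsum_eq_zero_add hsum]
    simp
  have hKs : Summable (fun m : ℕ => bc ν (m+1) * ‖w‖ ^ (m+1)) := by
    exact (summable_nat_add_iff (f := fun m : ℕ => bc ν m * ‖w‖ ^ m) 1).mpr
      (summable_bc_pow hν (norm_nonneg w))
  have htail : ‖∑' m : ℕ, (bc ν (m+1) : ℂ) * (w * (s:ℂ)) ^ (m+1)‖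
      ≤ (∑' m : ℕ, bc ν (m+1) * ‖w‖ ^ (m+1)) * s := by
    have hsn : Summable (fun m : ℕ => ‖(bc ν (m+1) : ℂ) * (w * (s:ℂ)) ^ (m+1)‖) := by
      exact (summable_nat_add_iff
        (f := fun m : ℕ => ‖(bc ν m : ℂ) * (w * (s:ℂ)) ^ m‖) 1).mpr (summable_norm_bcw hν _)
    refine (norm_tsum_le_tsum_norm hsn).trans ?_
    rw [← tsum_mul_right]
    refine Summable.tsum_le_tsum (fun m => ?_) hsn (hKs.mul_right s)
    rw [norm_mul, norm_pow, Complex.norm_real, Real.norm_of_nonneg (bc_pos hν _).le,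
      norm_mul, Complex.norm_real, Real.norm_of_nonneg hs0, mul_pow]
    have h1 : s ^ (m+1) ≤ s := by
      calc s ^ (m+1) ≤ s ^ 1 := pow_le_pow_of_le_one hs0 hs1 (by omega)
        _ = s := pow_one s
    have hb := (bc_pos hν (m+1)).le
    have hwn : (0:ℝ) ≤ ‖w‖ ^ (m+1) := by positivity
    calc bc ν (m+1) * (‖w‖ ^ (m+1) * s ^ (m+1))
        ≤ bc ν (m+1) * (‖w‖ ^ (m+1) * s) := by
          apply mul_le_mul_of_nonneg_left (mul_le_mul_of_nonneg_left h1 hwn) hb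
      _ = bc ν (m+1) * ‖w‖ ^ (m+1) * s := by ring
  calc bc ν 0 - (∑' m : ℕ, bc ν (m+1) * ‖w‖ ^ (m+1)) * s
      ≤ ‖(bc ν 0 : ℂ)‖ - ‖∑' m : ℕ, (bc ν (m+1) : ℂ) * (w * (s:ℂ)) ^ (m+1)‖ := by
        rw [Complex.norm_real, Real.norm_of_nonneg (bc_pos hν 0).le]
        linarith
    _ ≤ ‖besselF ν (w * s)‖ := by
        rw [hsplit]
        have := norm_sub_norm_le ((bc ν 0 : ℂ))
          (-(∑' m : ℕ, (bc ν (m+1) : ℂ) * (w * (s:ℂ)) ^ (m+1)))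
        simp only [norm_neg, sub_neg_eq_add] at this
        exact this

set_option maxHeartbeats 1000000 in
lemma besselT_eq_integral {ν : ℝ} (hν : -1 < ν) (w : ℂ) :
    besselT ν w ((starRingEnd ℂ) w)
      = ((∫ s in Set.Ioc (0:ℝ) 1,
          Complex.normSq (besselF ν (w * s)) * s ^ ν : ℝ) : ℂ) := by
  set v := (starRingEnd ℂ) w with hv
  set μ := volume.restrict (Set.Ioc (0:ℝ) 1) with hμ
  set φ : ℕ × ℕ → ℝ → ℂ := fun p s =>
    ((bc ν p.1 : ℂ) * (w * (s:ℂ)) ^ p.1) * ((bc ν p.2 : ℂ) * (v * (s:ℂ)) ^ p.2)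
      * ((s ^ ν : ℝ) : ℂ) with hφ
  set C : ℕ × ℕ → ℂ := fun p =>
    (bc ν p.1 : ℂ) * (bc ν p.2 : ℂ) * w ^ p.1 * v ^ p.2 with hC
  have hpt : ∀ p : ℕ × ℕ, ∀ s ∈ Set.Ioc (0:ℝ) 1,
      φ p s = C p * ((s ^ (((p.1 + p.2 : ℕ):ℝ) + ν) : ℝ) : ℂ) := by
    rintro ⟨m, n⟩ s hs
    simp only [hφ, hC]
    rw [rpow_nat_nu (m+n) hs.1]
    push_cast
    ring
  have hint : ∀ p : ℕ × ℕ,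
      Integrable (fun s => C p * ((s ^ (((p.1+p.2:ℕ):ℝ) + ν) : ℝ) : ℂ)) μ := fun p =>
    ((integrableOn_rpow_Ioc hν (p.1+p.2) one_pos).ofReal.const_mul (C p))
  have hφint : ∀ p, Integrable (φ p) μ := by
    intro p
    refine (hint p).congr ?_
    exact (ae_restrict_mem measurableSet_Ioc).mono fun s hs => (hpt p s hs).symm
  have hcastden : ∀ p : ℕ × ℕ, (((p.1+p.2:ℕ):ℝ) + ν + 1 : ℝ) = ((p.1:ℝ) + p.2 + ν + 1) := by
    intro p; push_cast; ring
  have hφval : ∀ p, ∫ s, φ p s ∂μ = bA ν w v p := by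
    intro p
    rw [integral_congr_ae ((ae_restrict_mem measurableSet_Ioc).mono fun s hs => hpt p s hs)]
    rw [integral_const_mul]
    have hIo : ∫ s, ((s ^ (((p.1+p.2:ℕ):ℝ)+ν) : ℝ) : ℂ) ∂μ
        = ((∫ s, s ^ (((p.1+p.2:ℕ):ℝ)+ν) ∂μ : ℝ) : ℂ) := integral_ofReal
    rw [hIo]
    have : ∫ s, s ^ (((p.1+p.2:ℕ):ℝ) + ν) ∂μ
        = (1:ℝ) ^ (((p.1+p.2:ℕ):ℝ) + ν + 1) / ((((p.1+p.2:ℕ):ℝ)) + ν + 1) := by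
      rw [hμ]; exact integral_rpow_Ioc hν (p.1+p.2) one_pos
    rw [this, Real.one_rpow, hcastden p]
    unfold bA
    rw [den_cast, Complex.ofReal_div, Complex.ofReal_one, mul_one_div]
  have hφnormval : ∀ p, ∫ s, ‖φ p s‖ ∂μ
      ≤ (1/(ν+1)) * ((bc ν p.1 * ‖w‖ ^ p.1) * (bc ν p.2 * ‖v‖ ^ p.2)) := by
    intro p
    have hptn : ∀ s ∈ Set.Ioc (0:ℝ) 1,
        ‖φ p s‖ = ‖C p‖ * s ^ (((p.1+p.2:ℕ):ℝ) + ν) := by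
      intro s hs
      rw [hpt p s hs, norm_mul, Complex.norm_real,
        Real.norm_of_nonneg (Real.rpow_pos_of_pos hs.1 _).le]
    rw [integral_congr_ae ((ae_restrict_mem measurableSet_Ioc).mono hptn)]
    rw [integral_const_mul]
    have : ∫ s, s ^ (((p.1+p.2:ℕ):ℝ) + ν) ∂μ
        = (1:ℝ) ^ (((p.1+p.2:ℕ):ℝ) + ν + 1) / ((((p.1+p.2:ℕ):ℝ)) + ν + 1) := by
      rw [hμ]; exact integral_rpow_Ioc hν (p.1+p.2) one_pos
    rw [this, Real.one_rpow, hcastden p]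
    have hCnorm : ‖C p‖ = (bc ν p.1 * ‖w‖ ^ p.1) * (bc ν p.2 * ‖v‖ ^ p.2) := by
      simp only [hC]
      rw [norm_mul, norm_mul, norm_mul, norm_pow, norm_pow, Complex.norm_real,
        Complex.norm_real, Real.norm_of_nonneg (bc_pos hν p.1).le,
        Real.norm_of_nonneg (bc_pos hν p.2).le]
      ring
    rw [hCnorm, mul_comm]
    have hle : 1/((p.1:ℝ)+p.2+ν+1) ≤ 1/(ν+1) := by
      apply one_div_le_one_div_of_le (by linarith)
      have h1 : (0:ℝ) ≤ (p.1:ℝ) := Nat.cast_nonneg _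
      have h2 : (0:ℝ) ≤ (p.2:ℝ) := Nat.cast_nonneg _
      linarith
    have hnn : (0:ℝ) ≤ bc ν p.1 * ‖w‖ ^ p.1 * (bc ν p.2 * ‖v‖ ^ p.2) := by
      have := (bc_pos hν p.1).le
      have := (bc_pos hν p.2).le
      positivity
    exact mul_le_mul_of_nonneg_right hle hnn
  have hsummable : Summable (fun p : ℕ×ℕ => ∫ s, ‖φ p s‖ ∂μ) :=
    Summable.of_nonneg_of_le (fun p => integral_nonneg fun s => norm_nonneg _)
      hφnormval ((summable_double_norm hν w v).mul_left _)
  have hexch : ∑' p : ℕ × ℕ, ∫ s, φ p s ∂μ = ∫ s, (∑' p : ℕ × ℕ, φ p s) ∂μ :=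
    integral_tsum_of_summable_integral_norm hφint hsummable
  have hsum_eq : ∀ s ∈ Set.Ioc (0:ℝ) 1, (∑' p : ℕ×ℕ, φ p s)
      = ((Complex.normSq (besselF ν (w * s)) * s ^ ν : ℝ) : ℂ) := by
    intro s hs
    have h2 : (∑' p : ℕ×ℕ, φ p s)
        = (∑' p : ℕ×ℕ, ((bc ν p.1:ℂ) * (w*(s:ℂ))^p.1) * ((bc ν p.2:ℂ) * (v*(s:ℂ))^p.2))
          * ((s^ν:ℝ):ℂ) := tsum_mul_right
    rw [h2, ← tsum_mul_tsum_of_summable_norm (f := fun m : ℕ => (bc ν m:ℂ) * (w*(s:ℂ))^m)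
        (g := fun n : ℕ => (bc ν n:ℂ) * (v*(s:ℂ))^n)
        (summable_norm_bcw hν _) (summable_norm_bcw hν _), ← besselF_eq, ← besselF_eq]
    have hvs : v * (s:ℂ) = (starRingEnd ℂ) (w * (s:ℂ)) := by
      rw [hv, map_mul, Complex.conj_ofReal]
    rw [hvs, besselF_conj, Complex.mul_conj]
    push_cast
    ring
  calc besselT ν w v = ∑' p : ℕ × ℕ, ∫ s, φ p s ∂μ := tsum_congr fun p => (hφval p).symm
    _ = ∫ s, (∑' p : ℕ × ℕ, φ p s) ∂μ := hexch
    _ = ∫ s, ((Complex.normSq (besselF ν (w*s)) * s^ν : ℝ):ℂ) ∂μ :=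
        integral_congr_ae ((ae_restrict_mem measurableSet_Ioc).mono hsum_eq)
    _ = ((∫ s, Complex.normSq (besselF ν (w*s)) * s^ν ∂μ : ℝ) : ℂ) := integral_ofReal

set_option maxHeartbeats 1000000 in
lemma integral_G_pos {ν : ℝ} (hν : -1 < ν) (w : ℂ) :
    0 < ∫ s in Set.Ioc (0:ℝ) 1, Complex.normSq (besselF ν (w * s)) * s ^ ν := by
  have hqnn : ∀ s : ℝ, 0 ≤ Complex.normSq (besselF ν (w * s)) :=
    fun s => Complex.normSq_nonneg _
  set M : ℝ := ∑' m : ℕ, bc ν m * ‖w‖ ^ m with hM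
  have hqcont : ContinuousOn (fun s : ℝ => Complex.normSq (besselF ν (w * s)))
      (Set.Icc 0 1) := Complex.continuous_normSq.comp_continuousOn (besselF_contOn hν w)
  have hqb : ∀ s ∈ Set.Icc (0:ℝ) 1, Complex.normSq (besselF ν (w * s)) ≤ M ^ 2 := by
    intro s hs
    rw [Complex.normSq_eq_norm_sq]
    have h1 := besselF_norm_le hν w hs
    have h2 := norm_nonneg (besselF ν (w * s))
    nlinarith
  have hGaesm : AEStronglyMeasurable
      (fun s : ℝ => Complex.normSq (besselF ν (w * s)) * s ^ ν)
      (MeasureTheory.volume.restrict (Set.Ioc 0 1)) := by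
    apply MeasureTheory.AEStronglyMeasurable.mul
    · exact (hqcont.mono Set.Ioc_subset_Icc_self).aestronglyMeasurable measurableSet_Ioc
    · exact ((continuousOn_id.rpow_const fun x hx => Or.inl (ne_of_gt hx.1)).aestronglyMeasurable
        measurableSet_Ioc)
  have hGint : MeasureTheory.IntegrableOn
      (fun s : ℝ => Complex.normSq (besselF ν (w * s)) * s ^ ν) (Set.Ioc 0 1) := by
    apply MeasureTheory.Integrable.mono
      (((integrableOn_rpow_Ioc hν 0 one_pos).const_mul (M^2))) hGaesm
    refine (MeasureTheory.ae_restrict_mem measurableSet_Ioc).mono fun s hs => ?_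
    have hsp : (0:ℝ) < s := hs.1
    have hrp := Real.rpow_pos_of_pos hsp ν
    rw [Real.norm_of_nonneg (mul_nonneg (hqnn s) hrp.le)]
    have hM2 : (0:ℝ) ≤ M^2 := sq_nonneg M
    rw [Real.norm_of_nonneg (by
      rw [Nat.cast_zero, zero_add]
      exact mul_nonneg hM2 hrp.le)]
    rw [Nat.cast_zero, zero_add]
    exact mul_le_mul_of_nonneg_right
      (hqb s ⟨hs.1.le, hs.2⟩) hrp.le
  set K : ℝ := ∑' m : ℕ, bc ν (m+1) * ‖w‖ ^ (m+1) with hK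
  have hKs : Summable (fun m : ℕ => bc ν (m+1) * ‖w‖ ^ (m+1)) :=
    (summable_nat_add_iff (f := fun m : ℕ => bc ν m * ‖w‖ ^ m) 1).mpr
      (summable_bc_pow hν (norm_nonneg w))
  have hK0 : 0 ≤ K := tsum_nonneg fun m =>
    mul_nonneg (bc_pos hν _).le (by positivity)
  set c0 : ℝ := bc ν 0 with hc0def
  have hc0 := bc_pos hν 0
  set δ : ℝ := min 1 (c0 / (2*K+1)) with hδ
  have hδ0 : 0 < δ := lt_min one_pos (div_pos hc0 (by linarith))
  have hδ1 : δ ≤ 1 := min_le_left _ _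
  have hlow : ∀ s ∈ Set.Ioc (0:ℝ) δ,
      (c0/2)^2 * s ^ (((0:ℕ):ℝ) + ν) ≤ Complex.normSq (besselF ν (w * s)) * s ^ ν := by
    intro s hs
    have hsI : s ∈ Set.Icc (0:ℝ) 1 := ⟨hs.1.le, hs.2.trans hδ1⟩
    have hFl := besselF_lower hν w hsI
    have hKsb : K * s ≤ c0/2 := by
      have h1 : K * s ≤ K * δ := mul_le_mul_of_nonneg_left hs.2 hK0
      have h2 : K * δ ≤ K * (c0/(2*K+1)) :=
        mul_le_mul_of_nonneg_left (min_le_right _ _) hK0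
      have hpos : (0:ℝ) < 2*K+1 := by linarith
      have h3 : K * (c0/(2*K+1)) ≤ c0/2 := by
        rw [← mul_div_assoc, div_le_div_iff₀ hpos two_pos]
        nlinarith
      linarith
    have hFl2 : c0/2 ≤ ‖besselF ν (w * s)‖ := by
      have : c0 - K * s ≤ ‖besselF ν (w * s)‖ := by
        have := hFl
        rw [mul_comm] at this
        linarith [hFl]
      linarith
    have hq : (c0/2)^2 ≤ Complex.normSq (besselF ν (w * s)) := by
      rw [Complex.normSq_eq_norm_sq]
      nlinarith [norm_nonneg (besselF ν (w * s))]
    rw [Nat.cast_zero, zero_add]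
    exact mul_le_mul_of_nonneg_right hq (Real.rpow_pos_of_pos hs.1 ν).le
  have hIδval : ∫ s in Set.Ioc (0:ℝ) δ, (c0/2)^2 * s ^ (((0:ℕ):ℝ) + ν)
      = (c0/2)^2 * (δ ^ (((0:ℕ):ℝ) + ν + 1) / (((0:ℕ):ℝ) + ν + 1)) := by
    rw [MeasureTheory.integral_const_mul, integral_rpow_Ioc hν 0 hδ0]
  have hIδpos : 0 < ∫ s in Set.Ioc (0:ℝ) δ, (c0/2)^2 * s ^ (((0:ℕ):ℝ) + ν) := by
    rw [hIδval, Nat.cast_zero, zero_add]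
    have h1 : (0:ℝ) < δ ^ (ν + 1) := Real.rpow_pos_of_pos hδ0 _
    have h2 : (0:ℝ) < ν + 1 := by linarith
    positivity
  have step1 : ∫ s in Set.Ioc (0:ℝ) δ, (c0/2)^2 * s ^ (((0:ℕ):ℝ) + ν)
      ≤ ∫ s in Set.Ioc (0:ℝ) δ, Complex.normSq (besselF ν (w * s)) * s ^ ν := by
    apply MeasureTheory.setIntegral_mono_on
      ((integrableOn_rpow_Ioc hν 0 hδ0).const_mul ((c0/2)^2))
      (hGint.mono_set (Set.Ioc_subset_Ioc_right hδ1)) measurableSet_Ioc hlow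
  have step2 : ∫ s in Set.Ioc (0:ℝ) δ, Complex.normSq (besselF ν (w * s)) * s ^ ν
      ≤ ∫ s in Set.Ioc (0:ℝ) 1, Complex.normSq (besselF ν (w * s)) * s ^ ν := by
    apply MeasureTheory.setIntegral_mono_set hGint
    · refine (MeasureTheory.ae_restrict_mem measurableSet_Ioc).mono fun s hs => ?_
      exact mul_nonneg (hqnn s) (Real.rpow_pos_of_pos hs.1 ν).le
    · exact (Set.Ioc_subset_Ioc_right hδ1).eventuallyLE
  linarith

lemma besselT_conj_ne {ν : ℝ} (hν : -1 < ν) (w : ℂ) :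
    besselT ν w ((starRingEnd ℂ) w) ≠ 0 := by
  rw [besselT_eq_integral hν w]
  exact_mod_cast (integral_G_pos hν w).ne'


lemma besselF_real_ne {ν : ℝ} (hν : -1 < ν) {x : ℝ} (hx : 0 ≤ x) :
    besselF ν (x : ℂ) ≠ 0 := by
  have heq : besselF ν (x : ℂ) = ((∑' m : ℕ, bc ν m * x ^ m : ℝ) : ℂ) := by
    rw [besselF_eq, Complex.ofReal_tsum]
    exact tsum_congr fun m => by push_cast; ring
  have hpos : 0 < ∑' m : ℕ, bc ν m * x ^ m := by
    refine Summable.tsum_pos (summable_bc_pow hν hx)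
      (fun m => mul_nonneg (bc_pos hν m).le (by positivity)) 0 ?_
    simpa using bc_pos hν 0
  rw [heq]
  exact_mod_cast hpos.ne'

/-- Let `ν > -1`. Every complex zero of `f_ν` is a negative real number. -/
theorem stmt5 (ν : ℝ) (hν : -1 < ν) :
    ∀ w : ℂ, besselF ν w = 0 → ∃ x : ℝ, x < 0 ∧ w = (x : ℂ) := by
  intro w h0
  have him : w.im = 0 := by
    by_contra him
    have hvw : (starRingEnd ℂ) w - w ≠ 0 := by
      rw [sub_ne_zero]
      intro h
      apply him
      have := congrArg Complex.im h
      simp only [Complex.conj_im] at this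
      linarith
    have hFv : besselF ν ((starRingEnd ℂ) w) = 0 := by
      rw [besselF_conj, h0, map_zero]
    have hkey := besselT_key hν w ((starRingEnd ℂ) w)
    rw [h0, hFv, zero_mul, mul_zero, sub_zero] at hkey
    exact besselT_conj_ne hν w (by
      rcases mul_eq_zero.mp hkey with h | h
      · exact absurd h hvw
      · exact h)
  have hw : w = ((w.re : ℝ) : ℂ) := Complex.ext rfl (by simp [him])
  refine ⟨w.re, ?_, hw⟩
  by_contra hx
  push_neg at hx
  exact besselF_real_ne hν hx (hw ▸ h0)
end

section
/- Let ν > -1 be real. Then every zero of f_ν is simple: if w₀ ∈ ℂ and f_ν(w₀) = 0, then f_ν'(w₀) ≠ 0. (Equivalently, every positive zero j of the Bessel function J_ν satisfies J_ν'(j) ≠ 0.) -/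
open Complex Filter FormalMultilinearSeries

/-- The coefficients of the series defining `besselF`. -/
noncomputable def bcoef (ν : ℝ) (m : ℕ) : ℂ :=
  ((m.factorial : ℂ) * Complex.Gamma ((m : ℂ) + (ν : ℂ) + 1))⁻¹

lemma besselF_congr {μ μ' : ℝ} (h : μ = μ') (w : ℂ) : besselF μ w = besselF μ' w := by rw [h]

lemma bc_arg_ne {ν : ℝ} (hν : -1 < ν) (m : ℕ) : ((m : ℂ) + (ν : ℂ) + 1) ≠ 0 := by
  intro h
  have : ((m : ℝ) + ν + 1 : ℝ) = 0 := by
    have := congrArg Complex.re h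
    simpa using this
  have hm : (0:ℝ) ≤ (m:ℝ) := Nat.cast_nonneg m
  linarith

lemma bc_gamma_ne {ν : ℝ} (hν : -1 < ν) (m : ℕ) :
    Complex.Gamma ((m : ℂ) + (ν : ℂ) + 1) ≠ 0 := by
  apply Complex.Gamma_ne_zero_of_re_pos
  have hm : (0:ℝ) ≤ (m:ℝ) := Nat.cast_nonneg m
  simp only [add_re, natCast_re, ofReal_re, one_re]
  linarith

lemma bcoef_ne_zero {ν : ℝ} (hν : -1 < ν) (m : ℕ) : bcoef ν m ≠ 0 := by
  apply inv_ne_zero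
  exact mul_ne_zero (Nat.cast_ne_zero.2 m.factorial_ne_zero) (bc_gamma_ne hν m)

lemma bcoef_succ {ν : ℝ} (hν : -1 < ν) (m : ℕ) :
    bcoef ν (m + 1) = (((m : ℂ) + 1) * ((m : ℂ) + ν + 1))⁻¹ * bcoef ν m := by
  unfold bcoef
  have h1 : ((m + 1 : ℕ) : ℂ) + ν + 1 = ((m : ℂ) + ν + 1) + 1 := by push_cast; ring
  rw [h1, Complex.Gamma_add_one _ (bc_arg_ne hν m), Nat.factorial_succ]
  push_cast
  have hf : ((m.factorial : ℂ)) ≠ 0 := Nat.cast_ne_zero.2 m.factorial_ne_zero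
  have hg : Complex.Gamma ((m : ℂ) + ν + 1) ≠ 0 := bc_gamma_ne hν m
  have ha : ((m : ℂ) + ν + 1) ≠ 0 := bc_arg_ne hν m
  have hm1 : ((m : ℂ) + 1) ≠ 0 := by
    intro h
    have := congrArg Complex.re h
    simp only [add_re, natCast_re, one_re, zero_re] at this
    have : (0:ℝ) ≤ (m:ℝ) := Nat.cast_nonneg m
    linarith
  field_simp

lemma bcoef_nu_succ {ν : ℝ} (hν : -1 < ν) (m : ℕ) :
    bcoef (ν + 1) m = ((m : ℂ) + ν + 1)⁻¹ * bcoef ν m := by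
  unfold bcoef
  have h1 : ((m : ℂ) + (↑(ν + 1) : ℂ) + 1) = ((m : ℂ) + ν + 1) + 1 := by push_cast; ring
  rw [h1, Complex.Gamma_add_one _ (bc_arg_ne hν m)]
  rw [mul_inv, mul_inv]
  ring

/-- The ratio test: the power series has infinite radius of convergence. -/
lemma bcoef_radius {ν : ℝ} (hν : -1 < ν) :
    (FormalMultilinearSeries.ofScalars ℂ (bcoef ν)).radius = ⊤ := by
  apply FormalMultilinearSeries.ofScalars_radius_eq_top_of_tendsto
  · exact Filter.Eventually.of_forall fun n => bcoef_ne_zero hν n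
  · have key : ∀ n : ℕ, ‖bcoef ν (n + 1)‖ / ‖bcoef ν n‖ =
        ‖(((n : ℂ) + 1) * ((n : ℂ) + ν + 1))⁻¹‖ := by
      intro n
      rw [bcoef_succ hν n, norm_mul, mul_div_assoc,
        div_self (norm_ne_zero_iff.2 (bcoef_ne_zero hν n)), mul_one]
    simp only [Nat.succ_eq_add_one]
    rw [show (fun n : ℕ => ‖bcoef ν (n+1)‖ / ‖bcoef ν n‖)
        = fun n : ℕ => ‖(((n : ℂ) + 1) * ((n : ℂ) + ν + 1))⁻¹‖ from funext key]
    have : ∀ n : ℕ, ‖(((n : ℂ) + 1) * ((n : ℂ) + ν + 1))⁻¹‖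
        = (((n : ℝ) + 1) * ((n : ℝ) + ν + 1))⁻¹ := by
      intro n
      have he : (((n : ℂ) + 1) * ((n : ℂ) + ν + 1)) = ((((n : ℝ) + 1) * ((n : ℝ) + ν + 1) : ℝ) : ℂ) := by
        push_cast; ring
      rw [he, norm_inv, Complex.norm_real, Real.norm_eq_abs, abs_of_pos]
      have h0 : (0:ℝ) ≤ (n:ℝ) := Nat.cast_nonneg n
      have : (0:ℝ) < (n:ℝ) + 1 := by linarith
      have : (0:ℝ) < (n:ℝ) + ν + 1 := by linarith
      nlinarith
    rw [show (fun n : ℕ => ‖(((n : ℂ) + 1) * ((n : ℂ) + ν + 1))⁻¹‖)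
        = fun n : ℕ => (((n : ℝ) + 1) * ((n : ℝ) + ν + 1))⁻¹ from funext this]
    apply Filter.Tendsto.inv_tendsto_atTop
    have hn : Filter.Tendsto (fun n : ℕ => (n:ℝ) + 1) atTop atTop :=
      tendsto_atTop_add_const_right _ 1 tendsto_natCast_atTop_atTop
    have hn2 : Filter.Tendsto (fun n : ℕ => (n:ℝ) + ν + 1) atTop atTop :=
      tendsto_atTop_add_const_right _ 1
        (tendsto_atTop_add_const_right _ ν tendsto_natCast_atTop_atTop)
    exact hn.atTop_mul_atTop₀ hn2

lemma besselF_eq_sum (ν : ℝ) :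
    besselF ν = (FormalMultilinearSeries.ofScalars ℂ (bcoef ν)).sum := by
  funext w
  unfold besselF FormalMultilinearSeries.sum
  apply tsum_congr
  intro m
  rw [FormalMultilinearSeries.ofScalars_apply_eq, bcoef, smul_eq_mul, div_eq_mul_inv, mul_comm]

lemma besselF_hasFPowerSeries {ν : ℝ} (hν : -1 < ν) :
    HasFPowerSeriesOnBall (besselF ν) (FormalMultilinearSeries.ofScalars ℂ (bcoef ν)) 0 ⊤ := by
  rw [besselF_eq_sum]
  have := (FormalMultilinearSeries.ofScalars ℂ (bcoef ν)).hasFPowerSeriesOnBall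
    (by rw [bcoef_radius hν]; exact ENNReal.zero_lt_top)
  rwa [bcoef_radius hν] at this

lemma besselF_hasSum {ν : ℝ} (hν : -1 < ν) (w : ℂ) :
    HasSum (fun n => bcoef ν n * w ^ n) (besselF ν w) := by
  have h := (besselF_hasFPowerSeries hν).hasSum
    (y := w) (by simp [EMetric.mem_ball, edist_lt_top])
  simp only [zero_add, FormalMultilinearSeries.ofScalars_apply_eq, smul_eq_mul] at h
  exact h

lemma besselF_analytic {ν : ℝ} (hν : -1 < ν) : AnalyticOnNhd ℂ (besselF ν) Set.univ := by
  intro z _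
  exact (besselF_hasFPowerSeries hν).analyticAt_of_mem (by simp [EMetric.mem_ball, edist_lt_top])

lemma besselF_zero (ν : ℝ) : besselF ν 0 = (Complex.Gamma (ν + 1))⁻¹ := by
  unfold besselF
  rw [tsum_eq_single 0]
  · norm_num
  · intro m hm
    rw [zero_pow hm, zero_div]

lemma besselF_zero_ne {ν : ℝ} (hν : -1 < ν) : besselF ν 0 ≠ 0 := by
  rw [besselF_zero]
  apply inv_ne_zero
  apply Complex.Gamma_ne_zero_of_re_pos
  simp only [add_re, ofReal_re, one_re]
  linarith

lemma bcoef_shift {ν : ℝ} (hν : -1 < ν) (n : ℕ) :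
    ((n : ℂ) + 1) * bcoef ν (n + 1) = bcoef (ν + 1) n := by
  rw [bcoef_succ hν n, bcoef_nu_succ hν n, mul_inv]
  have h1 : ((n : ℂ) + 1) ≠ 0 := by
    intro h
    have := congrArg Complex.re h
    simp only [add_re, natCast_re, one_re, zero_re] at this
    have hm : (0:ℝ) ≤ (n:ℝ) := Nat.cast_nonneg n
    linarith
  field_simp

/-- The derivative of `besselF ν` is `besselF (ν+1)`. -/
lemma besselF_deriv {ν : ℝ} (hν : -1 < ν) : deriv (besselF ν) = besselF (ν + 1) := by
  funext w
  rcases eq_or_ne w 0 with rfl | hw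
  · have h := (besselF_hasFPowerSeries hν).hasFPowerSeriesAt.deriv
    rw [h, besselF_zero]
    have h2 : (FormalMultilinearSeries.ofScalars ℂ (bcoef ν) 1 fun _ => (1:ℂ)) = bcoef ν 1 := by
      rw [FormalMultilinearSeries.ofScalars_apply_eq]
      simp
    rw [h2]
    unfold bcoef
    norm_num
    congr 1
    ring
  · -- w ≠ 0
    have h1 := (besselF_hasFPowerSeries hν).fderiv
    have h2 := h1.hasSum (y := w) (by simp [EMetric.mem_ball, edist_lt_top])
    have h3 := h2.mapL (ContinuousLinearMap.apply ℂ ℂ w)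
    simp only [ContinuousLinearMap.apply_apply, zero_add] at h3
    have h4 : HasSum (fun n => w * (bcoef (ν + 1) n * w ^ n))
        (fderiv ℂ (besselF ν) w w) := by
      apply h3.congr_fun
      intro n
      rw [FormalMultilinearSeries.derivSeries_apply_diag,
        FormalMultilinearSeries.ofScalars_apply_eq, nsmul_eq_mul]
      push_cast
      rw [← bcoef_shift hν n, smul_eq_mul]
      ring
    have h5 := (besselF_hasSum (by linarith : (-1:ℝ) < ν + 1) w).mul_left w
    have h6 : fderiv ℂ (besselF ν) w w = w * besselF (ν + 1) w := h4.unique h5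
    have h7 : fderiv ℂ (besselF ν) w w = w * deriv (besselF ν) w := by
      have : w = w • (1 : ℂ) := by simp
      conv_lhs => rw [this, map_smul]
      rw [fderiv_apply_one_eq_deriv]
      simp [smul_eq_mul]
    rw [h7] at h6
    exact mul_left_cancel₀ hw h6

/-- The three-term recurrence/ODE identity. -/
lemma besselF_rec {ν : ℝ} (hν : -1 < ν) (w : ℂ) :
    besselF ν w = ((ν : ℂ) + 1) * besselF (ν + 1) w + w * besselF (ν + 2) w := by
  have hν1 : (-1:ℝ) < ν + 1 := by linarith
  have hν2 : (-1:ℝ) < ν + 2 := by linarith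
  have h1 := (besselF_hasSum hν1 w).mul_left ((ν : ℂ) + 1)
  have h2 := (besselF_hasSum hν2 w).mul_left w
  set d : ℕ → ℂ := fun n => Nat.casesOn n 0 (fun k => bcoef (ν + 2) k * w ^ (k + 1)) with hd
  have h2' : HasSum (fun n => d (n + 1)) (w * besselF (ν + 2) w) := by
    apply h2.congr_fun
    intro n
    show bcoef (ν + 2) n * w ^ (n + 1) = w * (bcoef (ν + 2) n * w ^ n)
    ring
  have h2'' : HasSum d (w * besselF (ν + 2) w + ∑ i ∈ Finset.range 1, d i) :=
    (hasSum_nat_add_iff (f := d) 1).mp h2'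
  simp only [Finset.range_one, Finset.sum_singleton] at h2''
  have hd0 : d 0 = 0 := rfl
  rw [hd0, add_zero] at h2''
  have hsum := h1.add h2''
  have key : ∀ n : ℕ, ((ν : ℂ) + 1) * (bcoef (ν + 1) n * w ^ n) + d n = bcoef ν n * w ^ n := by
    intro n
    cases n with
    | zero =>
      show ((ν : ℂ) + 1) * (bcoef (ν + 1) 0 * 1) + 0 = bcoef ν 0 * 1
      rw [add_zero, mul_one, mul_one]
      rw [bcoef_nu_succ hν 0]
      have h0 : ((0 : ℕ) : ℂ) + ν + 1 = (ν : ℂ) + 1 := by push_cast; ring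
      rw [h0]
      have : ((ν : ℂ) + 1) ≠ 0 := by
        have := bc_arg_ne hν 0
        simpa using this
      field_simp
    | succ k =>
      show ((ν : ℂ) + 1) * (bcoef (ν + 1) (k + 1) * w ^ (k + 1)) +
        bcoef (ν + 2) k * w ^ (k + 1) = bcoef ν (k + 1) * w ^ (k + 1)
      have e1 : bcoef (ν + 1) (k + 1) = (((k:ℂ) + 1) + ν + 1)⁻¹ * bcoef ν (k + 1) := by
        have := bcoef_nu_succ hν (k + 1)
        rw [this]
        congr 1
        push_cast
        ring
      have e2 : bcoef (ν + 2) k = ((k:ℂ) + ν + 2)⁻¹ * bcoef (ν + 1) k := by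
        have h := bcoef_nu_succ hν1 k
        have harg : bcoef (ν + 1 + 1) k = bcoef (ν + 2) k := by
          congr 1; ring
        rw [← harg, h]
        congr 1
        push_cast
        ring
      have e3 : bcoef ν (k + 1) = (((k : ℂ) + 1) * ((k : ℂ) + ν + 1))⁻¹ * bcoef ν k :=
        bcoef_succ hν k
      have e4 : bcoef (ν + 1) k = ((k : ℂ) + ν + 1)⁻¹ * bcoef ν k := bcoef_nu_succ hν k
      rw [e1, e2, e3, e4]
      have hk1 : ((k : ℂ) + 1) ≠ 0 := by
        intro h
        have := congrArg Complex.re h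
        simp only [add_re, natCast_re, one_re, zero_re] at this
        have : (0:ℝ) ≤ (k:ℝ) := Nat.cast_nonneg k
        linarith
      have hkv1 : ((k : ℂ) + ν + 1) ≠ 0 := bc_arg_ne hν k
      have hkv2 : ((k : ℂ) + ν + 2) ≠ 0 := by
        have := bc_arg_ne hν1 k
        have harg : ((k:ℂ) + ↑(ν + 1) + 1) = ((k:ℂ) + ν + 2) := by push_cast; ring
        rwa [harg] at this
      have hkv2' : (((k : ℂ) + 1) + ν + 1) = ((k : ℂ) + ν + 2) := by ring
      rw [hkv2']
      field_simp
      ring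
  rw [show (fun n => ((ν : ℂ) + 1) * (bcoef (ν + 1) n * w ^ n) + d n)
      = fun n => bcoef ν n * w ^ n from funext key] at hsum
  exact (besselF_hasSum hν w).unique hsum

lemma besselF_iteratedDeriv {ν : ℝ} (hν : -1 < ν) (n : ℕ) :
    iteratedDeriv n (besselF ν) = besselF (ν + n) := by
  induction n with
  | zero => simp [iteratedDeriv_zero]
  | succ k ih =>
    rw [iteratedDeriv_succ, ih]
    have hνk : (-1:ℝ) < ν + k := by
      have : (0:ℝ) ≤ (k:ℝ) := Nat.cast_nonneg k
      linarith
    rw [besselF_deriv hνk]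
    funext w
    exact besselF_congr (by push_cast; ring) w

/-- Let `ν > -1`. Every zero of `f_ν` is simple: if `f_ν(w₀) = 0` then
`f_ν'(w₀) ≠ 0`. -/
theorem stmt6 (ν : ℝ) (hν : -1 < ν) :
    ∀ w₀ : ℂ, besselF ν w₀ = 0 → deriv (besselF ν) w₀ ≠ 0 := by
  intro w₀ h0 h1
  have hw₀ : w₀ ≠ 0 := by
    intro h
    exact besselF_zero_ne hν (h ▸ h0)
  -- all shifted Bessel functions vanish at w₀
  have key : ∀ n : ℕ, besselF (ν + n) w₀ = 0 ∧ besselF (ν + (n + 1 : ℕ)) w₀ = 0 := by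
    intro n
    induction n with
    | zero =>
      constructor
      · rw [besselF_congr (by push_cast; ring : ν + ((0:ℕ):ℝ) = ν) w₀]; exact h0
      · rw [besselF_congr (by push_cast; ring : ν + ((0+1:ℕ):ℝ) = ν + 1) w₀]
        rw [← besselF_deriv hν]
        exact h1
    | succ k ih =>
      refine ⟨ih.2, ?_⟩
      have hνk : (-1:ℝ) < ν + k := by
        have : (0:ℝ) ≤ (k:ℝ) := Nat.cast_nonneg k
        linarith
      have hrec := besselF_rec hνk w₀
      rw [besselF_congr (by push_cast; ring : (ν + (k:ℝ)) + 1 = ν + ((k+1:ℕ):ℝ)) w₀] at hrec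
      rw [besselF_congr (by push_cast; ring : (ν + (k:ℝ)) + 2 = ν + ((k+1+1:ℕ):ℝ)) w₀] at hrec
      rw [ih.1, ih.2, mul_zero, zero_add] at hrec
      have := mul_eq_zero.mp hrec.symm
      rcases this with h | h
      · exact absurd h hw₀
      · exact h
  have hiter : ∀ n : ℕ, iteratedDeriv n (besselF ν) w₀ = 0 := by
    intro n
    rw [besselF_iteratedDeriv hν n]
    exact (key n).1
  -- f vanishes in a neighborhood of w₀
  have hA : AnalyticAt ℂ (besselF ν) w₀ := besselF_analytic hν w₀ (Set.mem_univ _)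
  obtain ⟨q, hq⟩ := hA
  obtain ⟨r, hqr⟩ := hq
  have hq1 : ∀ n : ℕ, q n (fun _ => (1:ℂ)) = 0 := by
    intro n
    have h := hqr.factorial_smul (1 : ℂ) n
    have h2 : iteratedFDeriv ℂ n (besselF ν) w₀ (fun _ => (1:ℂ)) = 0 := hiter n
    rw [h2] at h
    have hne : (n.factorial : ℂ) ≠ 0 := Nat.cast_ne_zero.2 n.factorial_ne_zero
    have := h
    rw [← Nat.cast_smul_eq_nsmul ℂ] at this
    exact (smul_eq_zero.mp this).resolve_left hne
  have hqzero : ∀ (n : ℕ) (y : ℂ), (q n fun _ => y) = 0 := by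
    intro n y
    have : (fun _ : Fin n => y) = fun i : Fin n => y • (fun _ : Fin n => (1:ℂ)) i := by
      funext i; simp
    rw [this, (q n).map_smul_univ]
    rw [hq1 n, smul_zero]
  have hev : besselF ν =ᶠ[nhds w₀] 0 := by
    filter_upwards [Metric.eball_mem_nhds w₀ hqr.r_pos] with z hz
    have hz' : z - w₀ ∈ Metric.eball (0:ℂ) r := by
      rw [Metric.mem_eball] at hz ⊢
      have he : edist (z - w₀) 0 = edist z w₀ := by
        rw [edist_eq_enorm_sub, edist_eq_enorm_sub, sub_zero]
      rw [he]
      exact hz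
    have := hqr.sum hz'
    rw [show w₀ + (z - w₀) = z by ring] at this
    rw [this]
    unfold FormalMultilinearSeries.sum
    simp only [hqzero]
    exact tsum_zero
  have heq : Set.EqOn (besselF ν) 0 Set.univ :=
    (besselF_analytic hν).eqOn_zero_of_preconnected_of_eventuallyEq_zero
      isPreconnected_univ (Set.mem_univ w₀) hev
  exact besselF_zero_ne hν (heq (Set.mem_univ (0:ℂ)))
end

section
/- Let ν > -1 be real, τ > 0, R₀ > 0, R_∞ > 0. Define for real s > 0 the Bessel impedance Z_B(s) = R_∞ · I_ν(√(sτ)) / I_{ν+2}(√(sτ)) and the parallel impedance Z(s) = R₀ · Z_B(s) / (R₀ + Z_B(s)). Then Z(s) → R₀ as s → 0⁺ along the positive reals, and Z(s) → R₀ R_∞ / (R₀ + R_∞) as s → +∞ along the positive reals. -/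
/-- The modified Bessel function of the first kind,
`I_ν(z) = (z/2)^ν · f_ν(z²/4)`, with the principal branch of the power. -/
noncomputable def besselI (ν : ℝ) (z : ℂ) : ℂ :=
  (z / 2) ^ (ν : ℂ) * besselF ν (z ^ 2 / 4)

set_option maxHeartbeats 1000000
open Filter Topology

noncomputable def bt (μ w : ℝ) (m : ℕ) : ℝ :=
  w ^ m / ((m.factorial : ℝ) * Real.Gamma ((m : ℝ) + μ + 1))

lemma gamma_arg_pos {μ : ℝ} (hμ : -1 < μ) (m : ℕ) : (0:ℝ) < (m : ℝ) + μ + 1 := by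
  have : (0:ℝ) ≤ (m:ℝ) := Nat.cast_nonneg m
  linarith

lemma gammaPos {μ : ℝ} (hμ : -1 < μ) (m : ℕ) : 0 < Real.Gamma ((m : ℝ) + μ + 1) :=
  Real.Gamma_pos_of_pos (gamma_arg_pos hμ m)

lemma bt_nonneg {μ : ℝ} (hμ : -1 < μ) {w : ℝ} (hw : 0 ≤ w) (m : ℕ) : 0 ≤ bt μ w m := by
  have := gammaPos hμ m
  have : (0:ℝ) < (m.factorial : ℝ) := by positivity
  unfold bt
  positivity

lemma bt_succ {μ : ℝ} (hμ : -1 < μ) (w : ℝ) (m : ℕ) :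
    bt μ w (m + 1) = w * bt μ w m / (((m:ℝ) + 1) * ((m:ℝ) + μ + 1)) := by
  have h := gamma_arg_pos hμ m
  have hG : Real.Gamma (((m:ℝ) + μ + 1) + 1) = ((m:ℝ) + μ + 1) * Real.Gamma ((m:ℝ) + μ + 1) :=
    Real.Gamma_add_one h.ne'
  have hGp := gammaPos hμ m
  unfold bt
  rw [show ((m + 1 : ℕ) : ℝ) + μ + 1 = ((m:ℝ) + μ + 1) + 1 by push_cast; ring, hG]
  rw [Nat.factorial_succ]
  push_cast
  rw [pow_succ]
  field_simp

lemma summable_bt {μ : ℝ} (hμ : -1 < μ) (w : ℝ) : Summable (bt μ w) := by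
  obtain ⟨N, hN⟩ := exists_nat_ge (max (2 * |w|) (-μ))
  apply summable_of_ratio_norm_eventually_le (r := 1/2) (by norm_num)
  filter_upwards [eventually_ge_atTop N] with m hm
  have hmN : (N : ℝ) ≤ (m : ℝ) := by exact_mod_cast hm
  have h1 : 2 * |w| ≤ (m : ℝ) := le_trans (le_trans (le_max_left _ _) hN) hmN
  have h2 : -μ ≤ (m : ℝ) := le_trans (le_trans (le_max_right _ _) hN) hmN
  rw [bt_succ hμ]
  have hd : (1:ℝ) ≤ ((m:ℝ) + 1) * ((m:ℝ) + μ + 1) := by nlinarith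
  rw [Real.norm_eq_abs, Real.norm_eq_abs, abs_div, abs_mul]
  have hdd : |((m:ℝ) + 1) * ((m:ℝ) + μ + 1)| = ((m:ℝ) + 1) * ((m:ℝ) + μ + 1) := by
    rw [abs_of_pos]; nlinarith
  rw [hdd]
  rw [div_le_iff₀ (by nlinarith)]
  calc |w| * |bt μ w m| ≤ ((m:ℝ)/2) * |bt μ w m| := by
        apply mul_le_mul_of_nonneg_right _ (abs_nonneg _); linarith
    _ ≤ 1/2 * |bt μ w m| * (((m:ℝ) + 1) * ((m:ℝ) + μ + 1)) := by
        rw [show 1/2 * |bt μ w m| * (((m:ℝ) + 1) * ((m:ℝ) + μ + 1))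
            = (((m:ℝ) + 1) * ((m:ℝ) + μ + 1) / 2) * |bt μ w m| by ring]
        apply mul_le_mul_of_nonneg_right _ (abs_nonneg _)
        nlinarith [abs_nonneg w]

noncomputable def bG (μ w : ℝ) : ℝ := ∑' m : ℕ, bt μ w m

lemma bt_zero (μ w : ℝ) : bt μ w 0 = 1 / Real.Gamma (μ + 1) := by
  unfold bt; simp

lemma bG_pos {μ : ℝ} (hμ : -1 < μ) {w : ℝ} (hw : 0 ≤ w) : 0 < bG μ w := by
  refine Summable.tsum_pos (summable_bt hμ w) (bt_nonneg hμ hw) 0 ?_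
  rw [bt_zero]
  have := gammaPos hμ 0
  simp only [Nat.cast_zero, zero_add] at this
  positivity

lemma bt_le_bG {μ : ℝ} (hμ : -1 < μ) {w : ℝ} (hw : 0 ≤ w) (m : ℕ) : bt μ w m ≤ bG μ w :=
  Summable.le_tsum (summable_bt hμ w) m (fun j _ => bt_nonneg hμ hw j)

lemma wbt2 {ν : ℝ} (hν : -1 < ν) (w : ℝ) (m : ℕ) :
    w * bt (ν + 2) w m = bt ν w (m + 1) * (((m:ℝ) + 1) / ((m:ℝ) + ν + 2)) := by
  have h2 : (0:ℝ) < (m:ℝ) + ν + 2 := by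
    have := gamma_arg_pos hν m; linarith
  have hG : Real.Gamma (((m:ℝ) + ν + 2) + 1) = ((m:ℝ) + ν + 2) * Real.Gamma ((m:ℝ) + ν + 2) :=
    Real.Gamma_add_one h2.ne'
  have hGp : 0 < Real.Gamma ((m:ℝ) + ν + 2) := Real.Gamma_pos_of_pos h2
  unfold bt
  rw [show (m:ℝ) + (ν + 2) + 1 = ((m:ℝ) + ν + 2) + 1 by ring, hG,
    show ((m + 1 : ℕ) : ℝ) + ν + 1 = (m:ℝ) + ν + 2 by push_cast; ring,
    Nat.factorial_succ]
  have hf : (0:ℝ) < (m.factorial : ℝ) := by positivity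
  push_cast
  rw [pow_succ]
  field_simp

lemma key_upper {ν : ℝ} (hν : -1 < ν) {w : ℝ} (hw : 0 ≤ w) :
    w * bG (ν + 2) w ≤ bG ν w := by
  have hν2 : (-1:ℝ) < ν + 2 := by linarith
  have hsum2 : Summable (fun m => w * bt (ν + 2) w m) := (summable_bt hν2 w).mul_left w
  have hsum1 : Summable (fun m => bt ν w (m + 1)) :=
    (summable_nat_add_iff 1).mpr (summable_bt hν w)
  have h1 : w * bG (ν + 2) w = ∑' m, w * bt (ν + 2) w m := (tsum_mul_left).symm
  rw [h1]
  have h2 : ∑' m, w * bt (ν + 2) w m ≤ ∑' m, bt ν w (m + 1) := by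
    refine Summable.tsum_le_tsum (fun m => ?_) hsum2 hsum1
    rw [wbt2 hν w m]
    have hfrac : ((m:ℝ) + 1) / ((m:ℝ) + ν + 2) ≤ 1 := by
      rw [div_le_one (by have := gamma_arg_pos hν m; linarith)]
      linarith
    have := bt_nonneg hν hw (m + 1)
    nlinarith
  refine h2.trans ?_
  have := Summable.sum_add_tsum_nat_add 1 (summable_bt hν w)
  have hnn : 0 ≤ ∑ i ∈ Finset.range 1, bt ν w i :=
    Finset.sum_nonneg fun i _ => bt_nonneg hν hw i
  unfold bG
  linarith [this]

lemma key_lower {ν : ℝ} (hν : -1 < ν) (K : ℕ) {w : ℝ} (hw : 0 ≤ w) :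
    (((K:ℝ) + 1) / ((K:ℝ) + ν + 2)) * (bG ν w - ∑ k ∈ Finset.range (K + 1), bt ν w k)
      ≤ w * bG (ν + 2) w := by
  have hν2 : (-1:ℝ) < ν + 2 := by linarith
  have hKpos : (0:ℝ) < (K:ℝ) + ν + 2 := by have := gamma_arg_pos hν K; linarith
  have hsum2 : Summable (fun m => w * bt (ν + 2) w m) := (summable_bt hν2 w).mul_left w
  -- tail of w * bt2 ≥ scaled tail of bt
  have htail : ∑' i, w * bt (ν + 2) w (i + K) ≤ w * bG (ν + 2) w := by
    have := Summable.sum_add_tsum_nat_add K hsum2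
    have hnn : 0 ≤ ∑ i ∈ Finset.range K, w * bt (ν + 2) w i :=
      Finset.sum_nonneg fun i _ => mul_nonneg hw (bt_nonneg hν2 hw i)
    have h1 : w * bG (ν + 2) w = ∑' m, w * bt (ν + 2) w m := (tsum_mul_left).symm
    rw [h1]; linarith [this]
  refine le_trans ?_ htail
  have hsumtail : Summable (fun i => w * bt (ν + 2) w (i + K)) :=
    (summable_nat_add_iff K).mpr hsum2
  have hsumtail1 : Summable (fun i => bt ν w (i + (K + 1))) :=
    (summable_nat_add_iff (K + 1)).mpr (summable_bt hν w)
  have hterm : ∀ i : ℕ, (((K:ℝ) + 1) / ((K:ℝ) + ν + 2)) * bt ν w (i + (K + 1))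
      ≤ w * bt (ν + 2) w (i + K) := by
    intro i
    rw [wbt2 hν w (i + K), show i + K + 1 = i + (K + 1) by ring]
    have hiK : (0:ℝ) < ((i:ℝ) + (K:ℝ)) + ν + 2 := by
      have : (0:ℝ) ≤ (i:ℝ) := Nat.cast_nonneg i; linarith
    have hfrac : (((K:ℝ) + 1) / ((K:ℝ) + ν + 2))
        ≤ (((i + K : ℕ):ℝ) + 1) / (((i + K : ℕ):ℝ) + ν + 2) := by
      push_cast
      rw [div_le_div_iff₀ hKpos (by linarith)]
      have : (0:ℝ) ≤ (i:ℝ) := Nat.cast_nonneg i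
      nlinarith
    have hbt := bt_nonneg hν hw (i + (K + 1))
    calc (((K:ℝ) + 1) / ((K:ℝ) + ν + 2)) * bt ν w (i + (K + 1))
        ≤ ((((i + K : ℕ):ℝ) + 1) / (((i + K : ℕ):ℝ) + ν + 2)) * bt ν w (i + (K + 1)) :=
          mul_le_mul_of_nonneg_right hfrac hbt
      _ = bt ν w (i + (K + 1)) * ((((i + K : ℕ):ℝ) + 1) / (((i + K : ℕ):ℝ) + ν + 2)) := by ring
  have hmain : ∑' i, (((K:ℝ) + 1) / ((K:ℝ) + ν + 2)) * bt ν w (i + (K + 1))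
      ≤ ∑' i, w * bt (ν + 2) w (i + K) :=
    Summable.tsum_le_tsum hterm (hsumtail1.mul_left _) hsumtail
  have heq : ∑' i, (((K:ℝ) + 1) / ((K:ℝ) + ν + 2)) * bt ν w (i + (K + 1))
      = (((K:ℝ) + 1) / ((K:ℝ) + ν + 2)) * (bG ν w - ∑ k ∈ Finset.range (K + 1), bt ν w k) := by
    rw [tsum_mul_left]
    congr 1
    have := Summable.sum_add_tsum_nat_add (K + 1) (summable_bt hν w)
    unfold bG
    linarith [this]
  linarith [hmain, heq.symm.le]

lemma tail_tendsto {ν : ℝ} (hν : -1 < ν) (K : ℕ) :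
    Tendsto (fun w : ℝ => (∑ k ∈ Finset.range (K + 1), bt ν w k) / bG ν w) atTop (𝓝 0) := by
  set D : ℝ := ∑ k ∈ Finset.range (K + 1),
      1 / ((k.factorial : ℝ) * Real.Gamma ((k : ℝ) + ν + 1)) with hD
  set c : ℝ := ((K+1).factorial : ℝ) * Real.Gamma (((K+1 : ℕ) : ℝ) + ν + 1) with hc
  have hcpos : 0 < c := by
    have := gammaPos hν (K+1)
    rw [hc]; positivity
  have hDnn : 0 ≤ D := by
    refine Finset.sum_nonneg fun k _ => ?_
    have := gammaPos hν k
    positivity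
  have htendsto : Tendsto (fun w : ℝ => D * c / w) atTop (𝓝 0) :=
    tendsto_const_nhds.div_atTop tendsto_id
  refine tendsto_of_tendsto_of_tendsto_of_le_of_le' tendsto_const_nhds htendsto ?_ ?_
  · filter_upwards [eventually_ge_atTop (0:ℝ)] with w hw
    have hG : 0 < bG ν w := bG_pos hν hw
    have hT : 0 ≤ ∑ k ∈ Finset.range (K + 1), bt ν w k :=
      Finset.sum_nonneg fun k _ => bt_nonneg hν hw k
    positivity
  · filter_upwards [eventually_ge_atTop (1:ℝ)] with w hw
    have hw0 : (0:ℝ) < w := by linarith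
    have hG : 0 < bG ν w := bG_pos hν hw0.le
    have hGlb : w ^ (K+1) / c ≤ bG ν w := by
      have := bt_le_bG hν hw0.le (K+1)
      rwa [bt, ← hc] at this
    have hT : (∑ k ∈ Finset.range (K + 1), bt ν w k) ≤ D * w ^ K := by
      rw [hD, Finset.sum_mul]
      refine Finset.sum_le_sum fun k hk => ?_
      have hkK : k ≤ K := Nat.lt_succ_iff.mp (Finset.mem_range.mp hk)
      have hg := gammaPos hν k
      have hpow : w ^ k ≤ w ^ K := pow_le_pow_right₀ hw hkK
      rw [bt, div_eq_mul_one_div, mul_comm]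
      exact mul_le_mul_of_nonneg_left hpow (by positivity)
    have hpowpos : (0:ℝ) < w ^ (K+1) / c := by positivity
    calc (∑ k ∈ Finset.range (K + 1), bt ν w k) / bG ν w
        ≤ (D * w ^ K) / (w ^ (K+1) / c) := by
          apply div_le_div₀ (by positivity) hT hpowpos hGlb
      _ = D * c / w := by
          rw [div_div_eq_mul_div, pow_succ]
          field_simp
    
lemma ratio_tendsto_one {ν : ℝ} (hν : -1 < ν) :
    Tendsto (fun w : ℝ => w * bG (ν + 2) w / bG ν w) atTop (𝓝 1) := by
  rw [Metric.tendsto_nhds]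
  intro ε hε
  obtain ⟨K, hK⟩ := exists_nat_gt (2 * (ν + 1) / ε)
  have hKpos : (0:ℝ) < (K:ℝ) + ν + 2 := by have := gamma_arg_pos hν K; linarith
  have hcK : (1:ℝ) - ((K:ℝ) + 1) / ((K:ℝ) + ν + 2) < ε / 2 := by
    rw [div_lt_iff₀ (by linarith) ] at hK
    have h2 : 1 - ε/2 < ((K:ℝ) + 1) / ((K:ℝ) + ν + 2) := by
      rw [lt_div_iff₀ hKpos]; nlinarith
    linarith
  have hcK1 : ((K:ℝ) + 1) / ((K:ℝ) + ν + 2) ≤ 1 := by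
    rw [div_le_one hKpos]; linarith
  have hcKnn : (0:ℝ) ≤ ((K:ℝ) + 1) / ((K:ℝ) + ν + 2) := by positivity
  have htt := tail_tendsto hν K
  rw [Metric.tendsto_nhds] at htt
  filter_upwards [htt (ε/2) (by linarith), eventually_ge_atTop (0:ℝ)] with w hwt hw0
  have hG : 0 < bG ν w := bG_pos hν hw0
  have hT : 0 ≤ ∑ k ∈ Finset.range (K + 1), bt ν w k :=
    Finset.sum_nonneg fun k _ => bt_nonneg hν hw0 k
  rw [Real.dist_eq, sub_zero, abs_of_nonneg (by positivity)] at hwt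
  have hTlt : (∑ k ∈ Finset.range (K + 1), bt ν w k) < ε / 2 * bG ν w := by
    rw [div_lt_iff₀ hG] at hwt; linarith
  have hup : w * bG (ν + 2) w ≤ bG ν w := key_upper hν hw0
  have hlow := key_lower hν K hw0
  have hgap : bG ν w - w * bG (ν + 2) w < ε * bG ν w := by
    set cK := ((K:ℝ) + 1) / ((K:ℝ) + ν + 2)
    set T := ∑ k ∈ Finset.range (K + 1), bt ν w k
    nlinarith [mul_le_mul_of_nonneg_left hT hcKnn]
  have hlb : (1:ℝ) - ε < w * bG (ν + 2) w / bG ν w := by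
    rw [lt_div_iff₀ hG]; nlinarith
  have hub : w * bG (ν + 2) w / bG ν w ≤ 1 := (div_le_one hG).mpr hup
  rw [Real.dist_eq, abs_lt]
  constructor <;> linarith

lemma inv_ratio_tendsto_one {ν : ℝ} (hν : -1 < ν) :
    Tendsto (fun w : ℝ => bG ν w / (w * bG (ν + 2) w)) atTop (𝓝 1) := by
  have h := (ratio_tendsto_one hν).inv₀ one_ne_zero
  simp only [inv_div, inv_one] at h
  exact h

lemma small_tendsto {ν : ℝ} (hν : -1 < ν) :
    Tendsto (fun w : ℝ => bG ν w / (w * bG (ν + 2) w)) (𝓝[>] (0:ℝ)) atTop := by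
  have hν2 : (-1:ℝ) < ν + 2 := by linarith
  set c : ℝ := 1 / Real.Gamma (ν + 1) with hcdef
  set C : ℝ := bG (ν + 2) 1 with hCdef
  have hcpos : 0 < c := by
    have : 0 < Real.Gamma (ν + 1) := Real.Gamma_pos_of_pos (by linarith)
    rw [hcdef]; positivity
  have hCpos : 0 < C := bG_pos hν2 zero_le_one
  refine tendsto_atTop_mono' _ ?_ (tendsto_inv_nhdsGT_zero.const_mul_atTop
    (show (0:ℝ) < c / C by positivity))
  filter_upwards [Ioc_mem_nhdsGT_of_mem (Set.mem_Ico.mpr ⟨le_refl (0:ℝ), zero_lt_one⟩)]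
    with w hw
  obtain ⟨hw0, hw1⟩ := hw
  have hGc : c ≤ bG ν w := by
    have := bt_le_bG hν hw0.le 0
    rwa [bt_zero] at this
  have hG2C : bG (ν + 2) w ≤ C := by
    rw [hCdef]
    refine Summable.tsum_le_tsum (fun m => ?_) (summable_bt hν2 w) (summable_bt hν2 1)
    unfold bt
    have := gammaPos hν2 m
    have hp : w ^ m ≤ 1 ^ m := pow_le_pow_left₀ hw0.le hw1 m
    apply div_le_div₀ (by positivity) (by simpa using hp) (by positivity) le_rfl
  have hG2pos : 0 < bG (ν + 2) w := bG_pos hν2 hw0.le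
  have : c / (w * C) ≤ bG ν w / (w * bG (ν + 2) w) := by
    apply div_le_div₀ (bG_pos hν hw0.le).le hGc (by positivity)
    exact mul_le_mul_of_nonneg_left hG2C hw0.le
  calc c / C * w⁻¹ = c / (w * C) := by rw [← div_eq_mul_inv, div_div, mul_comm C w]
    _ ≤ _ := this

lemma besselF_ofReal {μ : ℝ} (hμ : -1 < μ) (w : ℝ) :
    besselF μ (w : ℂ) = ((bG μ w : ℝ) : ℂ) := by
  have h1 : besselF μ (w : ℂ) = ∑' m : ℕ, ((bt μ w m : ℝ) : ℂ) := by
    refine tsum_congr fun m => ?_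
    have harg : ((m : ℂ) + (μ : ℂ) + 1) = (((m : ℝ) + μ + 1 : ℝ) : ℂ) := by push_cast; ring
    rw [harg, Complex.Gamma_ofReal]
    unfold bt
    push_cast
    ring
  rw [h1, bG]
  exact (Complex.ofRealCLM.map_tsum (summable_bt hμ w)).symm

lemma besselI_ofReal {μ : ℝ} (hμ : -1 < μ) {x : ℝ} (hx : 0 < x) :
    besselI μ (x : ℂ) = (((x / 2) ^ μ * bG μ (x ^ 2 / 4) : ℝ) : ℂ) := by
  unfold besselI
  have h1 : ((x : ℂ) ^ 2 / 4) = ((x ^ 2 / 4 : ℝ) : ℂ) := by push_cast; ring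
  have h2 : ((x : ℂ) / 2) = ((x / 2 : ℝ) : ℂ) := by push_cast; ring
  rw [h1, h2, besselF_ofReal hμ, ← Complex.ofReal_cpow (by positivity) μ,
    ← Complex.ofReal_mul]

lemma bessel_ratio {ν : ℝ} (hν : -1 < ν) {x : ℝ} (hx : 0 < x) :
    besselI ν (x : ℂ) / besselI (ν + 2) (x : ℂ)
      = ((bG ν (x ^ 2 / 4) / ((x ^ 2 / 4) * bG (ν + 2) (x ^ 2 / 4)) : ℝ) : ℂ) := by
  have hν2 : (-1:ℝ) < ν + 2 := by linarith
  rw [besselI_ofReal hν hx, besselI_ofReal hν2 hx, ← Complex.ofReal_div]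
  congr 1
  have hhalf : (0:ℝ) < x / 2 := by linarith
  have hrpow : (x / 2) ^ (ν + 2) = (x / 2) ^ ν * (x ^ 2 / 4) := by
    rw [Real.rpow_add hhalf]
    congr 1
    rw [show (2:ℝ) = ((2:ℕ):ℝ) by norm_num, Real.rpow_natCast]
    ring
  rw [hrpow]
  have h1 : (0:ℝ) < (x / 2) ^ ν := Real.rpow_pos_of_pos hhalf ν
  have h2 : (0:ℝ) < bG (ν + 2) (x ^ 2 / 4) := bG_pos hν2 (by positivity)
  have h3 : (0:ℝ) < x ^ 2 / 4 := by positivity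
  field_simp

lemma F_atTop {R₀ Rinf : ℝ} (hR₀ : 0 < R₀) (hRinf : 0 < Rinf) :
    Tendsto (fun r : ℝ => R₀ * (Rinf * r) / (R₀ + Rinf * r)) atTop (𝓝 R₀) := by
  have hD : Tendsto (fun r : ℝ => R₀ + Rinf * r) atTop atTop :=
    tendsto_atTop_add_const_left _ _ (tendsto_id.const_mul_atTop hRinf)
  have hg : Tendsto (fun r : ℝ => R₀ - R₀ ^ 2 * (R₀ + Rinf * r)⁻¹) atTop (𝓝 R₀) := by
    have h0 : Tendsto (fun r : ℝ => (R₀ + Rinf * r)⁻¹) atTop (𝓝 0) := hD.inv_tendsto_atTop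
    have h2 : Tendsto (fun r : ℝ => R₀ - R₀ ^ 2 * (R₀ + Rinf * r)⁻¹) atTop
        (𝓝 (R₀ - R₀ ^ 2 * 0)) := tendsto_const_nhds.sub (h0.const_mul _)
    simpa using h2
  refine Tendsto.congr' ?_ hg
  filter_upwards [eventually_gt_atTop (0:ℝ)] with r hr
  have hDpos : 0 < R₀ + Rinf * r := by positivity
  field_simp
  ring

open Filter in
/-- Let `ν > -1`, `τ > 0`, `R₀ > 0`, `R_∞ > 0`. With
`Z_B(s) = R_∞ · I_ν(√(sτ))/I_{ν+2}(√(sτ))` and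
`Z(s) = R₀ Z_B(s)/(R₀ + Z_B(s))` for real `s > 0`, one has `Z(s) → R₀` as
`s → 0⁺` and `Z(s) → R₀R_∞/(R₀+R_∞)` as `s → +∞` along the positive reals. -/
theorem stmt16 (ν τ R₀ Rinf : ℝ) (hν : -1 < ν) (hτ : 0 < τ)
    (hR₀ : 0 < R₀) (hRinf : 0 < Rinf) :
    Tendsto (fun s : ℝ =>
        ((R₀ : ℂ) * ((Rinf : ℂ) * besselI ν ((Real.sqrt (s * τ) : ℝ) : ℂ) /
              besselI (ν + 2) ((Real.sqrt (s * τ) : ℝ) : ℂ))) /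
          ((R₀ : ℂ) + ((Rinf : ℂ) * besselI ν ((Real.sqrt (s * τ) : ℝ) : ℂ) /
              besselI (ν + 2) ((Real.sqrt (s * τ) : ℝ) : ℂ))))
      (nhdsWithin 0 (Set.Ioi 0)) (nhds ((R₀ : ℂ))) ∧
    Tendsto (fun s : ℝ =>
        ((R₀ : ℂ) * ((Rinf : ℂ) * besselI ν ((Real.sqrt (s * τ) : ℝ) : ℂ) /
              besselI (ν + 2) ((Real.sqrt (s * τ) : ℝ) : ℂ))) /
          ((R₀ : ℂ) + ((Rinf : ℂ) * besselI ν ((Real.sqrt (s * τ) : ℝ) : ℂ) /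
              besselI (ν + 2) ((Real.sqrt (s * τ) : ℝ) : ℂ))))
      atTop (nhds ((R₀ * Rinf / (R₀ + Rinf) : ℝ) : ℂ)) := by
  set ρ : ℝ → ℝ := fun w => bG ν w / (w * bG (ν + 2) w) with hρ
  set F : ℝ → ℝ := fun r => R₀ * (Rinf * r) / (R₀ + Rinf * r) with hF
  set u : ℝ → ℝ := fun s => s * τ / 4 with hu
  have heq : ∀ s : ℝ, 0 < s →
      ((R₀ : ℂ) * ((Rinf : ℂ) * besselI ν ((Real.sqrt (s * τ) : ℝ) : ℂ) /
              besselI (ν + 2) ((Real.sqrt (s * τ) : ℝ) : ℂ))) /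
          ((R₀ : ℂ) + ((Rinf : ℂ) * besselI ν ((Real.sqrt (s * τ) : ℝ) : ℂ) /
              besselI (ν + 2) ((Real.sqrt (s * τ) : ℝ) : ℂ)))
        = ((F (ρ (u s)) : ℝ) : ℂ) := by
    intro s hs
    have hst : 0 < s * τ := mul_pos hs hτ
    have hx : 0 < Real.sqrt (s * τ) := Real.sqrt_pos.mpr hst
    have hx2 : Real.sqrt (s * τ) ^ 2 = s * τ := Real.sq_sqrt hst.le
    have hr := bessel_ratio hν hx
    rw [hx2] at hr
    simp only [mul_div_assoc]
    rw [hr, hF, hρ, hu]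
    push_cast
    ring
  have m1 : Tendsto u (𝓝[>] (0:ℝ)) (𝓝[>] (0:ℝ)) := by
    rw [tendsto_nhdsWithin_iff]
    constructor
    · have : Tendsto u (𝓝 0) (𝓝 (0 * τ / 4)) :=
        ((continuous_id.mul continuous_const).div_const 4).tendsto 0
      simpa using this.mono_left nhdsWithin_le_nhds
    · filter_upwards [self_mem_nhdsWithin] with s hs
      have : (0:ℝ) < s := hs
      exact Set.mem_Ioi.mpr (by rw [hu]; positivity)
  have m2 : Tendsto u atTop atTop :=
    (tendsto_id.atTop_mul_const hτ).atTop_div_const (by norm_num)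
  constructor
  · have hρt : Tendsto (fun s => ρ (u s)) (𝓝[>] (0:ℝ)) atTop := (small_tendsto hν).comp m1
    have hreal : Tendsto (fun s => F (ρ (u s))) (𝓝[>] (0:ℝ)) (𝓝 R₀) :=
      (F_atTop hR₀ hRinf).comp hρt
    have hcx := (Complex.continuous_ofReal.tendsto R₀).comp hreal
    refine Tendsto.congr' ?_ hcx
    filter_upwards [self_mem_nhdsWithin] with s hs
    exact (heq s hs).symm
  · have hρt : Tendsto (fun s => ρ (u s)) atTop (𝓝 1) := (inv_ratio_tendsto_one hν).comp m2
    have hreal : Tendsto (fun s => F (ρ (u s))) atTop (𝓝 (R₀ * Rinf / (R₀ + Rinf))) := by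
      have hnum : Tendsto (fun s => R₀ * (Rinf * ρ (u s))) atTop (𝓝 (R₀ * (Rinf * 1))) :=
        tendsto_const_nhds.mul (tendsto_const_nhds.mul hρt)
      have hden : Tendsto (fun s => R₀ + Rinf * ρ (u s)) atTop (𝓝 (R₀ + Rinf * 1)) :=
        tendsto_const_nhds.add (tendsto_const_nhds.mul hρt)
      have hne : R₀ + Rinf * 1 ≠ 0 := by positivity
      have := hnum.div hden hne
      simp only [mul_one] at this; exact this
    have hcx := (Complex.continuous_ofReal.tendsto _).comp hreal
    refine Tendsto.congr' ?_ hcx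
    filter_upwards [eventually_gt_atTop (0:ℝ)] with s hs
    exact (heq s hs).symm
end
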